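/- Let f and g be nonzero relatively prime polynomials in ℂ[X, Y] of total degrees m and n respectively, each of positive degree in the variable Y. Then there exists a nonzero univariate polynomial h ∈ ℂ[X] of degree at most m·n such that h(x) = 0 for every (x, y) ∈ ℂ² with f(x, y) = 0 and g(x, y) = 0. -/

import Mathlib

section SylvesterHelpers

open Polynomial Matrix

variable {R : Type*} [CommRing R]


/-- Sylvester-style matrix: row `r` holds the coefficients of `X^r * F` (for `r < q`)
or of `X^(r-q) * G` (for `r ≥ q`); column `c` is the coefficient of `X^c`. -/
noncomputable def sylv (F G : R[X]) (p q : ℕ) : Matrix (Fin (p + q)) (Fin (p + q)) R :=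
  fun r c => if (r : ℕ) < q then (X ^ (r : ℕ) * F).coeff (c : ℕ)
    else (X ^ ((r : ℕ) - q) * G).coeff (c : ℕ)

lemma sum_fin_coeff_eq (N : ℕ) (P : R[X]) (h : P.natDegree < N) :
    ∑ c : Fin N, C (P.coeff (c : ℕ)) * X ^ (c : ℕ) = P := by
  rw [Fin.sum_univ_eq_sum_range fun i => C (P.coeff i) * X ^ i]
  simp only [C_mul_X_pow_eq_monomial]
  exact (P.as_sum_range' N h).symm

lemma sylv_row (F G : R[X]) (p q : ℕ) (hFp : F.natDegree ≤ p) (hGq : G.natDegree ≤ q)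
    (hp : 0 < p) (hq : 0 < q) :
    ((sylv F G p q).map C) *ᵥ (fun c : Fin (p + q) => (X : R[X]) ^ (c : ℕ)) =
      fun r : Fin (p + q) => if (r : ℕ) < q then X ^ (r : ℕ) * F else X ^ ((r : ℕ) - q) * G := by
  funext r
  simp only [mulVec, dotProduct, Matrix.map_apply, sylv]
  by_cases hr : (r : ℕ) < q
  · simp only [hr, if_true]
    refine sum_fin_coeff_eq _ _ ?_
    have h1 := natDegree_mul_le (p := (X : R[X]) ^ (r : ℕ)) (q := F)
    have h2 := natDegree_X_pow_le (R := R) (n := (r : ℕ))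
    omega
  · simp only [hr, if_false]
    refine sum_fin_coeff_eq _ _ ?_
    have hr2 : (r : ℕ) - q < p := by have := r.2; omega
    have h1 := natDegree_mul_le (p := (X : R[X]) ^ ((r : ℕ) - q)) (q := G)
    have h2 := natDegree_X_pow_le (R := R) (n := (r : ℕ) - q)
    omega

/-- The determinant of the Sylvester matrix is a linear combination of `F` and `G`. -/
lemma sylv_det_mem (F G : R[X]) (p q : ℕ) (hFp : F.natDegree ≤ p) (hGq : G.natDegree ≤ q)
    (hp : 0 < p) (hq : 0 < q) :
    ∃ A B : R[X], C ((sylv F G p q).det) = A * F + B * G := by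
  classical
  set M : Matrix (Fin (p + q)) (Fin (p + q)) R[X] := (sylv F G p q).map C with hM
  set v : Fin (p + q) → R[X] := fun c => (X : R[X]) ^ (c : ℕ) with hv
  have h1 : M.adjugate *ᵥ (M *ᵥ v) = (M.det) • v := by
    rw [mulVec_mulVec, Matrix.adjugate_mul, smul_mulVec, one_mulVec]
  have h2 := congrFun h1 (⟨0, by omega⟩ : Fin (p + q))
  have hdet : M.det = C ((sylv F G p q).det) := by
    rw [hM, ← RingHom.mapMatrix_apply, ← RingHom.map_det]
  rw [sylv_row F G p q hFp hGq hp hq] at h2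
  have hv0 : v ⟨0, by omega⟩ = 1 := by simp [hv]
  refine ⟨∑ r : Fin (p + q), if (r : ℕ) < q then M.adjugate ⟨0, by omega⟩ r * X ^ (r : ℕ) else 0,
    ∑ r : Fin (p + q), if (r : ℕ) < q then 0 else M.adjugate ⟨0, by omega⟩ r * X ^ ((r : ℕ) - q), ?_⟩
  rw [← hdet]
  simp only [Pi.smul_apply, hv0, smul_eq_mul, mul_one] at h2
  rw [← h2]
  simp only [mulVec, dotProduct, Finset.sum_mul, ← Finset.sum_add_distrib]
  refine Finset.sum_congr rfl fun r _ => ?_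
  by_cases hr : (r : ℕ) < q <;> simp [hr] <;> ring

theorem sylv_det_ne_zero [IsDomain R] [UniqueFactorizationMonoid R]
    (F G : R[X]) (hF : F ≠ 0) (hG : G ≠ 0) (hrp : IsRelPrime F G)
    (hp : 0 < F.natDegree) (hq : 0 < G.natDegree) :
    (sylv F G F.natDegree G.natDegree).det ≠ 0 := by
  classical
  set p := F.natDegree with hpdef
  set q := G.natDegree with hqdef
  intro hdet
  obtain ⟨v, hv0, hvM⟩ := Matrix.exists_vecMul_eq_zero_iff.mpr hdet
  set w : Fin (p + q) → R[X] :=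
    fun r => if (r : ℕ) < q then X ^ (r : ℕ) * F else X ^ ((r : ℕ) - q) * G with hw
  have hwdeg : ∀ r : Fin (p + q), (w r).natDegree < p + q := by
    intro r
    rw [hw]
    by_cases hr : (r : ℕ) < q
    · simp only [hr, if_true]
      have h1 := natDegree_mul_le (p := (X : R[X]) ^ (r : ℕ)) (q := F)
      have h2 := natDegree_X_pow_le (R := R) (n := (r : ℕ))
      omega
    · simp only [hr, if_false]
      have hr2 : (r : ℕ) - q < p := by have := r.2; omega
      have h1 := natDegree_mul_le (p := (X : R[X]) ^ ((r : ℕ) - q)) (q := G)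
      have h2 := natDegree_X_pow_le (R := R) (n := (r : ℕ) - q)
      omega
  have hwcoeff : ∀ (r : Fin (p + q)) (c : Fin (p + q)),
      (w r).coeff (c : ℕ) = sylv F G p q r c := by
    intro r c
    rw [hw]
    by_cases hr : (r : ℕ) < q <;> simp [sylv, hr]
  have hP : ∑ r : Fin (p + q), C (v r) * w r = 0 := by
    ext c
    rw [finset_sum_coeff, coeff_zero]
    by_cases hc : c < p + q
    · have h1 := congrFun hvM ⟨c, hc⟩
      simp only [vecMul, dotProduct, Pi.zero_apply] at h1
      rw [← h1]
      refine Finset.sum_congr rfl fun r _ => ?_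
      rw [coeff_C_mul, hwcoeff r ⟨c, hc⟩]
    · refine Finset.sum_eq_zero fun r _ => ?_
      rw [coeff_C_mul, coeff_eq_zero_of_natDegree_lt (by have := hwdeg r; omega), mul_zero]
  set A : R[X] := ∑ r : Fin (p + q),
    if (r : ℕ) < q then C (v r) * X ^ (r : ℕ) else 0 with hA
  set B : R[X] := ∑ r : Fin (p + q),
    if (r : ℕ) < q then 0 else C (v r) * X ^ ((r : ℕ) - q) with hB
  have hAB : A * F + B * G = 0 := by
    rw [← hP, hA, hB, Finset.sum_mul, Finset.sum_mul, ← Finset.sum_add_distrib]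
    refine Finset.sum_congr rfl fun r _ => ?_
    by_cases hr : (r : ℕ) < q <;> simp [hw, hr] <;> ring
  have hAdeg : A.natDegree ≤ q - 1 := by
    refine natDegree_sum_le_of_forall_le _ _ fun r _ => ?_
    by_cases hr : (r : ℕ) < q
    · simp only [hr, if_true]
      exact le_trans (natDegree_C_mul_X_pow_le _ _) (by omega)
    · simp [hr]
  have hBdeg : B.natDegree ≤ p - 1 := by
    refine natDegree_sum_le_of_forall_le _ _ fun r _ => ?_
    by_cases hr : (r : ℕ) < q
    · simp [hr]
    · simp only [hr, if_false]
      have : (r : ℕ) - q ≤ p - 1 := by have := r.2; omega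
      exact le_trans (natDegree_C_mul_X_pow_le _ _) this
  obtain ⟨r, hr⟩ := Function.ne_iff.mp hv0
  by_cases hrq : (r : ℕ) < q
  · -- A ≠ 0, G ∣ A, contradiction
    have hAne : A ≠ 0 := by
      intro h0
      have : A.coeff (r : ℕ) = v r := by
        rw [hA, finset_sum_coeff]
        rw [Finset.sum_eq_single r]
        · simp [hrq, coeff_X_pow]
        · intro r' _ hr'
          by_cases hr'q : (r' : ℕ) < q
          · simp only [hr'q, if_true, coeff_C_mul, coeff_X_pow]
            have : ¬ ((r : ℕ) = (r' : ℕ)) := fun hh => hr' (Fin.ext hh.symm)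
            simp [this]
          · simp [hr'q]
        · simp
      rw [h0] at this
      exact hr (by simpa using this.symm)
    have hdvd : G ∣ A := by
      refine (hrp.symm.dvd_of_dvd_mul_right (y := A) ?_)
      exact ⟨-B, by linear_combination hAB⟩
    have := natDegree_le_of_dvd hdvd hAne
    omega
  · have hBne : B ≠ 0 := by
      intro h0
      have : B.coeff ((r : ℕ) - q) = v r := by
        rw [hB, finset_sum_coeff]
        rw [Finset.sum_eq_single r]
        · simp [hrq, coeff_X_pow]
        · intro r' _ hr'
          by_cases hr'q : (r' : ℕ) < q
          · simp [hr'q]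
          · simp only [hr'q, if_false, coeff_C_mul, coeff_X_pow]
            have : ¬ ((r : ℕ) - q = (r' : ℕ) - q) := by
              intro hh
              exact hr' (Fin.ext (by omega))
            simp [this]
        · simp
      rw [h0] at this
      exact hr (by simpa using this.symm)
    have hdvd : F ∣ B := by
      refine (hrp.dvd_of_dvd_mul_right (y := B) ?_)
      exact ⟨-A, by linear_combination hAB⟩
    have := natDegree_le_of_dvd hdvd hBne
    omega

theorem sylv_det_totalDegree_le {k : Type*} [CommRing k] {σ : Type*}
    (F G : Polynomial (MvPolynomial σ k)) (p q m n : ℕ)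
    (hpm : p ≤ m) (hqn : q ≤ n)
    (hFc : ∀ i, F.coeff i ≠ 0 → (F.coeff i).totalDegree + i ≤ m)
    (hGc : ∀ i, G.coeff i ≠ 0 → (G.coeff i).totalDegree + i ≤ n) :
    ((sylv F G p q).det).totalDegree ≤ m * n := by
  classical
  rw [Matrix.det_apply]
  refine le_trans (MvPolynomial.totalDegree_finset_sum _ _) (Finset.sup_le fun τ _ => ?_)
  have hsgn : (Equiv.Perm.sign τ • ∏ i, sylv F G p q (τ i) i : MvPolynomial σ k).totalDegree
      = (∏ i, sylv F G p q (τ i) i : MvPolynomial σ k).totalDegree := by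
    obtain h1 | h1 := Int.units_eq_one_or (Equiv.Perm.sign τ) <;> rw [h1] <;>
      simp [Units.smul_def, MvPolynomial.totalDegree_neg]
  rw [hsgn]
  by_cases hz : ∀ i, sylv F G p q (τ i) i ≠ 0
  swap
  · push_neg at hz
    obtain ⟨i, hi⟩ := hz
    rw [Finset.prod_eq_zero (f := fun j => sylv F G p q (τ j) j) (Finset.mem_univ i) hi]
    simp
  refine le_trans (MvPolynomial.totalDegree_finset_prod _ _) ?_
  -- key entrywise bound
  have key : ∀ i : Fin (p + q),
      (sylv F G p q (τ i) i).totalDegree + (i : ℕ) + (if ((τ i : ℕ)) < q then 0 else q)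
        ≤ (if ((τ i : ℕ)) < q then m else n) + (τ i : ℕ) := by
    intro i
    have hne := hz i
    by_cases hr : ((τ i : ℕ)) < q
    · simp only [hr, if_true]
      have hco : sylv F G p q (τ i) i = if ((τ i : ℕ)) ≤ (i : ℕ)
          then F.coeff ((i : ℕ) - (τ i : ℕ)) else 0 := by
        simp only [sylv, hr, if_true, coeff_X_pow_mul']
      rw [hco] at hne ⊢
      by_cases hle : ((τ i : ℕ)) ≤ (i : ℕ)
      · rw [if_pos hle] at hne ⊢
        have := hFc _ hne
        omega
      · rw [if_neg hle] at hne; simp at hne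
    · simp only [hr, if_false]
      have hco : sylv F G p q (τ i) i = if ((τ i : ℕ) - q) ≤ (i : ℕ)
          then G.coeff ((i : ℕ) - ((τ i : ℕ) - q)) else 0 := by
        simp only [sylv, hr, if_false, coeff_X_pow_mul']
      rw [hco] at hne ⊢
      by_cases hle : ((τ i : ℕ) - q) ≤ (i : ℕ)
      · rw [if_pos hle] at hne ⊢
        have := hGc _ hne
        omega
      · rw [if_neg hle] at hne; simp at hne
  have H := Finset.sum_le_sum (fun i (_ : i ∈ Finset.univ) => key i)
  rw [Finset.sum_add_distrib, Finset.sum_add_distrib, Finset.sum_add_distrib] at H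
  have e1 : ∀ a b : ℕ, (∑ r : Fin (p + q), if (r : ℕ) < q then a else b) = q * a + p * b := by
    intro a b
    rw [Fin.sum_univ_eq_sum_range (fun j => if j < q then a else b)]
    rw [Finset.range_eq_Ico, ← Finset.sum_Ico_consecutive _ (Nat.zero_le q) (by omega : q ≤ p + q)]
    have h1 : ∑ j ∈ Finset.Ico 0 q, (if j < q then a else b) = q * a := by
      rw [Finset.sum_congr rfl fun j hj => if_pos (Finset.mem_Ico.mp hj).2]
      simp [mul_comm]
    have h2 : ∑ j ∈ Finset.Ico q (p + q), (if j < q then a else b) = p * b := by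
      rw [Finset.sum_congr rfl fun j hj => if_neg (by have := (Finset.mem_Ico.mp hj).1; omega)]
      simp [mul_comm]
    omega
  have e2 : (∑ i : Fin (p + q), if ((τ i : ℕ)) < q then 0 else q) = p * q := by
    rw [Equiv.sum_comp τ (fun r : Fin (p + q) => if (r : ℕ) < q then 0 else q), e1]
    omega
  have e3 : (∑ i : Fin (p + q), if ((τ i : ℕ)) < q then m else n) = q * m + p * n := by
    rw [Equiv.sum_comp τ (fun r : Fin (p + q) => if (r : ℕ) < q then m else n), e1]
  have e4 : (∑ i : Fin (p + q), ((τ i : ℕ))) = ∑ i : Fin (p + q), (i : ℕ) :=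
    Equiv.sum_comp τ (fun r : Fin (p + q) => (r : ℕ))
  rw [e2, e3, e4] at H
  have harith : q * m + p * n ≤ m * n + p * q := by
    have h1 : (q : ℤ) * m + p * n ≤ m * n + p * q := by
      nlinarith [mul_nonneg (sub_nonneg.mpr (show (p : ℤ) ≤ m by exact_mod_cast hpm))
        (sub_nonneg.mpr (show (q : ℤ) ≤ n by exact_mod_cast hqn))]
    exact_mod_cast h1
  omega

end SylvesterHelpers

open MvPolynomial

/-- Newton's elimination: given two nonzero relatively prime bivariate polynomials
over `ℂ` of total degrees `m`, `n`, each of positive degree in `Y`, there is a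
nonzero univariate polynomial of degree at most `m * n` vanishing at the
`x`-coordinate of every common zero. -/
theorem newton_elimination (f g : MvPolynomial (Fin 2) ℂ) (hf : f ≠ 0) (hg : g ≠ 0)
    (hrp : IsRelPrime f g) (m n : ℕ) (hm : f.totalDegree = m) (hn : g.totalDegree = n)
    (hfY : 0 < f.degreeOf 1) (hgY : 0 < g.degreeOf 1) :
    ∃ h : Polynomial ℂ, h ≠ 0 ∧ h.natDegree ≤ m * n ∧
      ∀ x y : ℂ, eval ![x, y] f = 0 → eval ![x, y] g = 0 → h.eval x = 0 := by
  classical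
  set sw : Fin 2 ≃ Fin 2 := Equiv.swap 0 1 with hsw
  set f' : MvPolynomial (Fin 2) ℂ := rename sw f with hf'
  set g' : MvPolynomial (Fin 2) ℂ := rename sw g with hg'
  set F : Polynomial (MvPolynomial (Fin 1) ℂ) := finSuccEquiv ℂ 1 f' with hFdef
  set G : Polynomial (MvPolynomial (Fin 1) ℂ) := finSuccEquiv ℂ 1 g' with hGdef
  have hswinj : Function.Injective (sw : Fin 2 → Fin 2) := sw.injective
  have hf'ne : f' ≠ 0 := by
    rw [hf']
    exact fun h0 => hf ((MvPolynomial.rename_injective _ hswinj) (by simpa using h0))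
  have hg'ne : g' ≠ 0 := by
    rw [hg']
    exact fun h0 => hg ((MvPolynomial.rename_injective _ hswinj) (by simpa using h0))
  have hFne : F ≠ 0 := by
    rw [hFdef]; exact fun h0 => hf'ne ((finSuccEquiv ℂ 1).injective (by simpa using h0))
  have hGne : G ≠ 0 := by
    rw [hGdef]; exact fun h0 => hg'ne ((finSuccEquiv ℂ 1).injective (by simpa using h0))
  have hp : F.natDegree = f.degreeOf 1 := by
    rw [hFdef, natDegree_finSuccEquiv, hf']
    have := MvPolynomial.degreeOf_rename_of_injective (p := f) hswinj 1
    rw [show sw 1 = 0 from Equiv.swap_apply_right 0 1] at this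
    exact this
  have hq : G.natDegree = g.degreeOf 1 := by
    rw [hGdef, natDegree_finSuccEquiv, hg']
    have := MvPolynomial.degreeOf_rename_of_injective (p := g) hswinj 1
    rw [show sw 1 = 0 from Equiv.swap_apply_right 0 1] at this
    exact this
  have hp0 : 0 < F.natDegree := by rw [hp]; exact hfY
  have hq0 : 0 < G.natDegree := by rw [hq]; exact hgY
  -- relative primality transfers
  have hrp' : IsRelPrime F G := by
    intro d hdF hdG
    set e : MvPolynomial (Fin 2) ℂ ≃ₐ[ℂ] Polynomial (MvPolynomial (Fin 1) ℂ) :=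
      (renameEquiv ℂ sw).trans (finSuccEquiv ℂ 1) with he
    have heF : e f = F := by rw [he, hFdef, hf']; rfl
    have heG : e g = G := by rw [he, hGdef, hg']; rfl
    have h1 : e.symm d ∣ f := by
      have := map_dvd e.symm.toAlgHom hdF
      rw [← heF] at this
      simpa using this
    have h2 : e.symm d ∣ g := by
      have := map_dvd e.symm.toAlgHom hdG
      rw [← heG] at this
      simpa using this
    have := (hrp h1 h2).map e.toAlgHom
    simpa using this
  set Res : MvPolynomial (Fin 1) ℂ := (sylv F G F.natDegree G.natDegree).det with hRes
  have hResne : Res ≠ 0 := sylv_det_ne_zero F G hFne hGne hrp' hp0 hq0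
  have hpm : F.natDegree ≤ m := by
    rw [hp, ← hm]; exact degreeOf_le_totalDegree f 1
  have hqn : G.natDegree ≤ n := by
    rw [hq, ← hn]; exact degreeOf_le_totalDegree g 1
  have hResdeg : Res.totalDegree ≤ m * n := by
    refine sylv_det_totalDegree_le F G _ _ m n hpm hqn (fun i hi => ?_) (fun i hi => ?_)
    · have h1 := totalDegree_coeff_finSuccEquiv_add_le f' i (by rw [hFdef] at hi; exact hi)
      have h2 : f'.totalDegree ≤ f.totalDegree := by
        rw [hf']; exact totalDegree_rename_le _ _
      rw [hFdef]; omega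
    · have h1 := totalDegree_coeff_finSuccEquiv_add_le g' i (by rw [hGdef] at hi; exact hi)
      have h2 : g'.totalDegree ≤ g.totalDegree := by
        rw [hg']; exact totalDegree_rename_le _ _
      rw [hGdef]; omega
  obtain ⟨A, B, hAB⟩ := sylv_det_mem F G F.natDegree G.natDegree le_rfl le_rfl hp0 hq0
  -- the univariate polynomial
  set ev0 : MvPolynomial (Fin 0) ℂ →+* ℂ := MvPolynomial.eval ![] with hev0
  have hev0inj : Function.Injective ev0 := by
    intro a b hab
    obtain ⟨a', rfl⟩ := MvPolynomial.C_surjective (Fin 0) a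
    obtain ⟨b', rfl⟩ := MvPolynomial.C_surjective (Fin 0) b
    rw [hev0] at hab
    simp only [MvPolynomial.eval_C] at hab
    rw [hab]
  refine ⟨(Polynomial.map ev0 (finSuccEquiv ℂ 0 Res)), ?_, ?_, ?_⟩
  · rw [Polynomial.map_ne_zero_iff hev0inj]
    exact fun h0 => hResne ((finSuccEquiv ℂ 0).injective (by simpa using h0))
  · rw [Polynomial.natDegree_map_eq_of_injective hev0inj, natDegree_finSuccEquiv]
    exact le_trans (degreeOf_le_totalDegree Res 0) hResdeg
  · intro x y hx hy
    set Φ : Polynomial (MvPolynomial (Fin 1) ℂ) →+* ℂ :=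
      (Polynomial.evalRingHom y).comp (Polynomial.mapRingHom (MvPolynomial.eval ![x])) with hΦ
    have hΦF : Φ F = 0 := by
      rw [hΦ, hFdef]
      have h1 := eval_eq_eval_mv_eval' ![x] y f'
      simp only [RingHom.comp_apply, Polynomial.coe_mapRingHom, Polynomial.coe_evalRingHom]
      rw [← h1, hf', eval_rename]
      have hfun : (Fin.cons y ![x] : Fin 2 → ℂ) ∘ (sw : Fin 2 → Fin 2) = ![x, y] := by
        funext i
        fin_cases i <;> simp [hsw, Equiv.swap_apply_left, Equiv.swap_apply_right]
      rw [hfun]; exact hx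
    have hΦG : Φ G = 0 := by
      rw [hΦ, hGdef]
      have h1 := eval_eq_eval_mv_eval' ![x] y g'
      simp only [RingHom.comp_apply, Polynomial.coe_mapRingHom, Polynomial.coe_evalRingHom]
      rw [← h1, hg', eval_rename]
      have hfun : (Fin.cons y ![x] : Fin 2 → ℂ) ∘ (sw : Fin 2 → Fin 2) = ![x, y] := by
        funext i
        fin_cases i <;> simp [hsw, Equiv.swap_apply_left, Equiv.swap_apply_right]
      rw [hfun]; exact hy
    have hResx : MvPolynomial.eval ![x] Res = 0 := by
      have := congrArg Φ hAB
      rw [map_add, _root_.map_mul, _root_.map_mul, hΦF, hΦG, mul_zero, mul_zero, add_zero] at this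
      rw [← this, hΦ]
      simp
      rfl
    -- relate h.eval x to eval ![x] Res
    have h1 := eval_eq_eval_mv_eval' (![] : Fin 0 → ℂ) x Res
    have hcons : (Fin.cons x ![] : Fin 1 → ℂ) = ![x] := by
      funext i; fin_cases i; rfl
    rw [hcons] at h1
    rw [← hev0] at h1
    rw [← h1]
    exact hResx
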